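/- Let $N$ denote the standard normal CDF and $N'$ its density. For every $\beta>0$, the equation $c+\beta c N(c)+\beta N'(c)=0$ has a unique real solution $c^*$, and $c^*<0$. -/

import Mathlib

open MeasureTheory ProbabilityTheory

/-- The standard normal density. -/
noncomputable def stdNormalPDF (x : ℝ) : ℝ := gaussianPDFReal 0 1 x

/-- The standard normal cumulative distribution function. -/
noncomputable def stdNormalCDF (c : ℝ) : ℝ := ∫ x in Set.Iic c, stdNormalPDF x

lemma stdNormalPDF_eq (x : ℝ) :
    stdNormalPDF x = (Real.sqrt (2 * Real.pi))⁻¹ * Real.exp (-x ^ 2 / 2) := by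
  simp [stdNormalPDF, gaussianPDFReal]

lemma stdNormalPDF_pos (x : ℝ) : 0 < stdNormalPDF x :=
  gaussianPDFReal_pos 0 1 x one_ne_zero

lemma stdNormalPDF_le_one (x : ℝ) : stdNormalPDF x ≤ 1 := by
  rw [stdNormalPDF_eq]
  have h1 : (1 : ℝ) ≤ Real.sqrt (2 * Real.pi) := by
    rw [show (1 : ℝ) = Real.sqrt 1 by simp]
    apply Real.sqrt_le_sqrt
    nlinarith [Real.pi_gt_three]
  have h2 : Real.exp (-x ^ 2 / 2) ≤ 1 := by
    rw [Real.exp_le_one_iff]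
    nlinarith [sq_nonneg x]
  have h3 : (Real.sqrt (2 * Real.pi))⁻¹ ≤ 1 := by
    rw [inv_le_one_iff₀]; right; exact h1
  calc (Real.sqrt (2 * Real.pi))⁻¹ * Real.exp (-x ^ 2 / 2) ≤ 1 * 1 := by
        apply mul_le_mul h3 h2 (Real.exp_nonneg _)
        linarith
    _ = 1 := by ring

lemma continuous_stdNormalPDF : Continuous stdNormalPDF := by
  simp only [funext stdNormalPDF_eq]
  continuity

lemma integrable_stdNormalPDF : Integrable stdNormalPDF :=
  integrable_gaussianPDFReal 0 1

lemma stdNormalCDF_nonneg (c : ℝ) : 0 ≤ stdNormalCDF c :=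
  integral_nonneg fun x => (stdNormalPDF_pos x).le

lemma hasDerivAt_stdNormalCDF (c : ℝ) :
    HasDerivAt stdNormalCDF (stdNormalPDF c) c := by
  have heq : ∀ u : ℝ, stdNormalCDF u = stdNormalCDF 0 + ∫ x in (0:ℝ)..u, stdNormalPDF x := by
    intro u
    have h := intervalIntegral.integral_Iic_sub_Iic (μ := volume) (f := stdNormalPDF)
      (a := 0) (b := u) integrable_stdNormalPDF.integrableOn integrable_stdNormalPDF.integrableOn
    simp only [stdNormalCDF]
    linarith
  have h : HasDerivAt (fun u => stdNormalCDF 0 + ∫ x in (0:ℝ)..u, stdNormalPDF x)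
      (stdNormalPDF c) c := by
    have := intervalIntegral.integral_hasDerivAt_right
      (continuous_stdNormalPDF.intervalIntegrable 0 c)
      (continuous_stdNormalPDF.stronglyMeasurable.stronglyMeasurableAtFilter)
      continuous_stdNormalPDF.continuousAt
    exact ((hasDerivAt_const c (stdNormalCDF 0)).add this).congr_deriv (by simp)
  exact h.congr_of_eventuallyEq (Filter.Eventually.of_forall heq)

lemma hasDerivAt_stdNormalPDF (c : ℝ) :
    HasDerivAt stdNormalPDF (-c * stdNormalPDF c) c := by
  have h : HasDerivAt (fun x : ℝ => (Real.sqrt (2 * Real.pi))⁻¹ * Real.exp (-x ^ 2 / 2))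
      ((Real.sqrt (2 * Real.pi))⁻¹ * (Real.exp (-c ^ 2 / 2) * (-c))) c := by
    have hinner : HasDerivAt (fun x : ℝ => -x ^ 2 / 2) (-c) c := by
      have h2 : HasDerivAt (fun x : ℝ => -x ^ 2 / 2) (-(2 * c ^ 1) / 2) c :=
        (((hasDerivAt_pow 2 c).neg).div_const 2)
      convert h2 using 1
      ring
    exact (hinner.exp.const_mul _)
  rw [funext stdNormalPDF_eq]
  convert h using 1
  ring

noncomputable def cfun (β : ℝ) (c : ℝ) : ℝ :=
  c + β * c * stdNormalCDF c + β * stdNormalPDF c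

lemma hasDerivAt_cfun (β c : ℝ) :
    HasDerivAt (cfun β) (1 + β * stdNormalCDF c) c := by
  have h1 : HasDerivAt (fun c : ℝ => β * c * stdNormalCDF c)
      (β * stdNormalCDF c + β * c * stdNormalPDF c) c := by
    have := ((hasDerivAt_id c).const_mul β).mul (hasDerivAt_stdNormalCDF c)
    exact this.congr_deriv (by show β * 1 * stdNormalCDF c + β * c * stdNormalPDF c = _; ring)
  have h2 : HasDerivAt (fun c : ℝ => β * stdNormalPDF c)
      (β * (-c * stdNormalPDF c)) c := (hasDerivAt_stdNormalPDF c).const_mul β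
  have := ((hasDerivAt_id c).add h1).add h2
  exact this.congr_deriv (by ring)

lemma strictMono_cfun (β : ℝ) (hβ : 0 < β) : StrictMono (cfun β) := by
  apply strictMono_of_deriv_pos
  intro x
  rw [(hasDerivAt_cfun β x).deriv]
  have := stdNormalCDF_nonneg x
  nlinarith

theorem cstar_exists_unique_neg (β : ℝ) (hβ : 0 < β) :
    (∃! c : ℝ, c + β * c * stdNormalCDF c + β * stdNormalPDF c = 0) ∧
    (∀ c : ℝ, c + β * c * stdNormalCDF c + β * stdNormalPDF c = 0 → c < 0) := by
  have hmono : StrictMono (cfun β) := strictMono_cfun β hβ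
  have hcont : Continuous (cfun β) := by
    exact Differentiable.continuous fun x => (hasDerivAt_cfun β x).differentiableAt
  have h0 : 0 < cfun β 0 := by
    have := stdNormalPDF_pos 0
    simp only [cfun]
    nlinarith
  have ha : cfun β (-(β + 1)) < 0 := by
    have h1 : β * (-(β + 1)) * stdNormalCDF (-(β + 1)) ≤ 0 := by
      have hN := stdNormalCDF_nonneg (-(β + 1))
      nlinarith [mul_nonneg (mul_nonneg hβ.le (by linarith : (0:ℝ) ≤ β + 1)) hN]
    have h2 : β * stdNormalPDF (-(β + 1)) ≤ β :=
      (mul_le_of_le_one_right hβ.le (stdNormalPDF_le_one _))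
    simp only [cfun]
    linarith
  have hab : (-(β + 1) : ℝ) ≤ 0 := by linarith
  obtain ⟨c, hc_mem, hc⟩ : ∃ c ∈ Set.Icc (-(β + 1) : ℝ) 0, cfun β c = 0 :=
    intermediate_value_Icc hab hcont.continuousOn ⟨ha.le, h0.le⟩
  constructor
  · exact ⟨c, hc, fun y hy => hmono.injective (hy.trans hc.symm)⟩
  · intro x hx
    have hx' : cfun β x = 0 := hx
    have hlt : cfun β x < cfun β 0 := by rw [hx']; exact h0
    exact hmono.lt_iff_lt.mp hlt
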